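/- arXiv:2007.04114 — 3 statements merged into one kernel-verified Lean document; each statement's English description precedes it below -/
import Mathlib

section
/- Let q be a prime power, d = (d_1,...,d_k) a k-tuple of divisors d_i > 1 of q−1, and let P = (P_1,...,P_k) be a k-tuple of nonzero polynomials in F_q[x] that is d-multiplicatively independent over F_q. Then for every positive integer t, the tuple P (with the polynomials viewed as elements of F_{q^t}[x]) is d-multiplicatively independent over F_{q^t}. -/
open Polynomial

/-- A `k`-tuple `P` of polynomials over `F` is `d`-multiplicatively independent over `F`. -/
def MultIndep {F : Type*} [Field F] {k : ℕ} (d : Fin k → ℕ) (P : Fin k → Polynomial F) : Prop :=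
  ∀ a : Fin k → ℕ, (∀ i, a i < d i) →
    ∀ (u : Fˣ) (G : Polynomial F), G.Monic →
      (∏ i, P i ^ ((Finset.univ.lcm d / d i) * a i)) =
        Polynomial.C (u : F) * G ^ (Finset.univ.lcm d) →
      (∀ i, a i = 0) ∧ G = 1 ∧ u = 1

open UniqueFactorizationMonoid in
/-- Monic `L`-th roots in `K[X]` are unique. -/
lemma monic_pow_inj {K : Type*} [Field K] {G H : Polynomial K} (hG : G.Monic) (hH : H.Monic)
    {L : ℕ} (hL : L ≠ 0) (h : G ^ L = H ^ L) : G = H := by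
  classical
  have hG0 := hG.ne_zero
  have hH0 := hH.ne_zero
  have hm : (Associates.mk G) ^ L = (Associates.mk H) ^ L := by
    rw [← Associates.mk_pow, ← Associates.mk_pow, h]
  have hGm : Associates.mk G ≠ 0 := Associates.mk_ne_zero.2 hG0
  have hHm : Associates.mk H ≠ 0 := Associates.mk_ne_zero.2 hH0
  have hnf : normalizedFactors (Associates.mk G) = normalizedFactors (Associates.mk H) := by
    have h2 := congrArg normalizedFactors hm
    rw [normalizedFactors_pow, normalizedFactors_pow] at h2
    refine Multiset.ext.2 fun a => ?_
    have h3 := congrArg (Multiset.count a) h2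
    simp only [Multiset.count_nsmul] at h3
    exact Nat.eq_of_mul_eq_mul_left (Nat.pos_of_ne_zero hL) h3
  have hmk : Associates.mk G = Associates.mk H := by
    have e1 := prod_normalizedFactors hGm
    have e2 := prod_normalizedFactors hHm
    rw [associated_iff_eq] at e1 e2
    rw [← e1, ← e2, hnf]
  exact Polynomial.eq_of_monic_of_associated hG hH
    (Associates.mk_eq_mk_iff_associated.1 hmk)

/-- Elements of `E` fixed by `x ↦ x ^ |F|` lie in the image of `F`. -/
lemma fixed_mem_range {F E : Type*} [Field F] [Fintype F] [Field E] [Fintype E] [Algebra F E]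
    (x : E) (hx : x ^ Fintype.card F = x) : ∃ y : F, algebraMap F E y = x := by
  classical
  set q' := Fintype.card F with hq'
  have hq2 : 1 < q' := Fintype.one_lt_card
  set f : Polynomial E := X ^ q' - X with hf
  have hf0 : f ≠ 0 := FiniteField.X_pow_card_sub_X_ne_zero E hq2
  have hfd : f.natDegree = q' := FiniteField.X_pow_card_sub_X_natDegree_eq E hq2
  set T : Finset E := Finset.univ.image (algebraMap F E) with hT
  have hTcard : T.card = q' := by
    rw [hT, Finset.card_image_of_injective _ (algebraMap F E).injective, Finset.card_univ]
  have hsub : T ⊆ f.roots.toFinset := by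
    intro z hz
    rw [hT, Finset.mem_image] at hz
    obtain ⟨y, -, rfl⟩ := hz
    rw [Multiset.mem_toFinset, mem_roots hf0]
    have hy : (algebraMap F E y) ^ q' = algebraMap F E y := by
      rw [← map_pow, hq', FiniteField.pow_card]
    simp only [hf, IsRoot, eval_sub, eval_pow, eval_X, sub_eq_zero, hy]
  have hle : f.roots.toFinset.card ≤ q' :=
    le_trans (Multiset.toFinset_card_le _) ((card_roots' f).trans_eq hfd)
  have hTeq : T = f.roots.toFinset :=
    Finset.eq_of_subset_of_card_le hsub (by rw [hTcard]; exact hle)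
  have hxroot : x ∈ f.roots.toFinset := by
    rw [Multiset.mem_toFinset, mem_roots hf0]
    simp [hf, IsRoot, sub_eq_zero, hx]
  rw [← hTeq, hT, Finset.mem_image] at hxroot
  obtain ⟨y, -, hy⟩ := hxroot
  exact ⟨y, hy⟩

theorem stmt3 {F E : Type*} [Field F] [Fintype F] [Field E] [Fintype E] [Algebra F E]
    (q t : ℕ) (hq : Fintype.card F = q) (ht : 0 < t) (hE : Fintype.card E = q ^ t)
    (k : ℕ) (d : Fin k → ℕ) (hd1 : ∀ i, 1 < d i) (hdvd : ∀ i, d i ∣ q - 1)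
    (P : Fin k → Polynomial F) (hP0 : ∀ i, P i ≠ 0)
    (hindep : MultIndep d P) :
    MultIndep d (fun i => (P i).map (algebraMap F E)) := by
  classical
  intro a ha u G hG heq
  set φ := algebraMap F E with hφ
  have hφinj : Function.Injective φ := φ.injective
  set L : ℕ := Finset.univ.lcm d with hL
  have hLne : L ≠ 0 := by
    rw [hL]
    intro h0
    rw [Finset.lcm_eq_zero_iff] at h0
    obtain ⟨i, -, hi⟩ := h0
    have := hd1 i; omega
  -- the product as a polynomial over F
  set Q : Polynomial F := ∏ i, P i ^ ((L / d i) * a i) with hQ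
  have hQ0 : Q ≠ 0 := Finset.prod_ne_zero_iff.2 fun i _ => pow_ne_zero _ (hP0 i)
  have hmapQ : Q.map φ = Polynomial.C (u : E) * G ^ L := by
    rw [hQ, Polynomial.map_prod]
    simpa only [Polynomial.map_pow] using heq
  -- leading coefficient
  set c : F := Q.leadingCoeff with hc
  have hc0 : c ≠ 0 := leadingCoeff_ne_zero.2 hQ0
  have hcu : φ c = (u : E) := by
    have h1 : (Q.map φ).leadingCoeff = φ c := leadingCoeff_map φ
    rw [hmapQ] at h1
    rw [← h1, leadingCoeff_mul, leadingCoeff_C, (hG.pow L).leadingCoeff, mul_one]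
  -- G^L is the image of a monic polynomial over F
  set M : Polynomial F := Polynomial.C c⁻¹ * Q with hM
  have hMmonic : M.Monic := by
    rw [Monic, hM, leadingCoeff_mul, leadingCoeff_C, ← hc, inv_mul_cancel₀ hc0]
  have hGL : G ^ L = M.map φ := by
    rw [hM, Polynomial.map_mul, Polynomial.map_C, map_inv₀, hcu]
    rw [hmapQ, ← mul_assoc, ← Polynomial.C_mul, inv_mul_cancel₀ (Units.ne_zero u),
      Polynomial.C_1, one_mul]
  -- Frobenius setup
  obtain ⟨n, hp, hcard⟩ := FiniteField.card F (ringChar F)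
  have hpprime : (ringChar F).Prime := hp
  haveI : CharP E (ringChar F) := charP_of_injective_algebraMap hφinj (ringChar F)
  haveI : ExpChar E (ringChar F) := ExpChar.prime hpprime
  set σ : E →+* E := iterateFrobenius E (ringChar F) (n : ℕ) with hσ
  have hσdef : ∀ x : E, σ x = x ^ Fintype.card F := by
    intro x; rw [hσ, iterateFrobenius_def, ← hcard]
  have hσφ : ∀ y : F, σ (φ y) = φ y := by
    intro y
    rw [hσdef, ← map_pow, FiniteField.pow_card]
  -- G is fixed by σ
  have hGσ : G.map σ = G := by
    have h1 : (G.map σ) ^ L = G ^ L := by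
      rw [← Polynomial.map_pow, hGL, Polynomial.map_map]
      congr 1
      exact RingHom.ext hσφ
    exact monic_pow_inj (hG.map σ) hG hLne h1
  -- hence G lifts to F
  have hlift : G ∈ Polynomial.lifts φ := by
    rw [Polynomial.lifts_iff_coeff_lifts]
    intro m
    have : σ (G.coeff m) = G.coeff m := by
      conv_rhs => rw [← hGσ]
      rw [Polynomial.coeff_map]
    rw [hσdef] at this
    exact fixed_mem_range _ this
  obtain ⟨G', hG'map, -, hG'monic⟩ := Polynomial.lifts_and_degree_eq_and_monic hlift hG
  -- pull back the equation
  have hMG' : M = G' ^ L := by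
    apply Polynomial.map_injective φ hφinj
    rw [Polynomial.map_pow, hG'map, ← hGL]
  have hQeq : Q = Polynomial.C c * G' ^ L := by
    rw [← hMG', hM, ← mul_assoc, ← Polynomial.C_mul, mul_inv_cancel₀ hc0,
      Polynomial.C_1, one_mul]
  set u' : Fˣ := Units.mk0 c hc0 with hu'
  obtain ⟨h1, h2, h3⟩ := hindep a ha u' G' hG'monic (by rw [← hL, ← hQ]; exact hQeq)
  refine ⟨h1, ?_, ?_⟩
  · rw [← hG'map, h2, Polynomial.map_one]
  · ext
    rw [← hcu, hc]
    have : c = 1 := by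
      have := congrArg Units.val h3
      simpa [hu'] using this
    rw [← hc, this, map_one, Units.val_one]
end

section
/- Let d > 1 be a positive integer and let f ∈ Z[x] be a polynomial that is not of the form a·g(x)^d with a ∈ Z and g ∈ Z[x]. Then there exists M such that for every prime p > M, the reduction f(x) mod p ∈ F_p[x] is not of the form a·g(x)^d with a ∈ F_p and g ∈ F_p[x]. -/
open Polynomial

private lemma aux_pow_eq_le {α : Type*} [CommMonoidWithZero α] [IsCancelMulZero α] {r u v : α}
    (hr : r ≠ 0) (hu : ¬ r ∣ u) {i j : ℕ} (hij : i ≤ j)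
    (h : r ^ i * u = r ^ j * v) : i = j := by
  by_contra hne
  have hlt : i < j := lt_of_le_of_ne hij hne
  have hcancel : u = r ^ (j - i) * v := by
    apply mul_left_cancel₀ (pow_ne_zero i hr)
    rw [h, ← mul_assoc, ← pow_add]
    congr 2
    omega
  apply hu
  rw [hcancel]
  exact dvd_mul_of_dvd_left (dvd_pow_self r (by omega)) v

private lemma aux_pow_eq {α : Type*} [CommMonoidWithZero α] [IsCancelMulZero α] {r u v : α}
    (hr : r ≠ 0) (hu : ¬ r ∣ u) (hv : ¬ r ∣ v) {i j : ℕ}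
    (h : r ^ i * u = r ^ j * v) : i = j := by
  rcases le_total i j with hij | hij
  · exact aux_pow_eq_le hr hu hij h
  · exact (aux_pow_eq_le hr hv hij h.symm).symm

private lemma aux_int_smul (m : ℤ) (w : Polynomial ℚ) : m • w = C (m : ℚ) * w := by
  rw [zsmul_eq_mul, ← C_eq_intCast]

/-- Clearing denominators in a Bézout identity over ℚ. -/
private lemma exists_int_bezout {A B : Polynomial ℤ}
    (h : IsCoprime (A.map (Int.castRingHom ℚ)) (B.map (Int.castRingHom ℚ))) :
    ∃ (U V : Polynomial ℤ) (N : ℤ), N ≠ 0 ∧ U * A + V * B = C N := by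
  obtain ⟨u, v, huv⟩ := h
  obtain ⟨b₁, hb₁⟩ := IsLocalization.integerNormalization_map_to_map (nonZeroDivisors ℤ) u
  obtain ⟨b₂, hb₂⟩ := IsLocalization.integerNormalization_map_to_map (nonZeroDivisors ℤ) v
  rw [aux_int_smul] at hb₁ hb₂
  have hb₁0 : (b₁ : ℤ) ≠ 0 := nonZeroDivisors.coe_ne_zero b₁
  have hb₂0 : (b₂ : ℤ) ≠ 0 := nonZeroDivisors.coe_ne_zero b₂
  refine ⟨C (b₂ : ℤ) * IsLocalization.integerNormalization (nonZeroDivisors ℤ) u,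
    C (b₁ : ℤ) * IsLocalization.integerNormalization (nonZeroDivisors ℤ) v,
    (b₁ : ℤ) * (b₂ : ℤ), mul_ne_zero hb₁0 hb₂0, ?_⟩
  apply Polynomial.map_injective (Int.castRingHom ℚ) Int.cast_injective
  have halg : algebraMap ℤ ℚ = Int.castRingHom ℚ := by
    ext n; simp
  rw [halg] at hb₁ hb₂
  rw [Polynomial.map_add, Polynomial.map_mul, Polynomial.map_mul, Polynomial.map_mul,
    Polynomial.map_mul, hb₁, hb₂, map_C, map_C, map_C]
  simp only [eq_intCast]
  rw [show (C ((↑(b₁:ℤ)*(b₂:ℤ) : ℤ) : ℚ)) = C (((b₁:ℤ):ℚ)) * C (((b₂:ℤ):ℚ)) by push_cast; rw [C_mul]]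
  calc C ((b₂:ℤ):ℚ) * (C ((b₁:ℤ):ℚ) * u) * A.map (Int.castRingHom ℚ) +
        C ((b₁:ℤ):ℚ) * (C ((b₂:ℤ):ℚ) * v) * B.map (Int.castRingHom ℚ)
      = C ((b₁:ℤ):ℚ) * C ((b₂:ℤ):ℚ) *
        (u * A.map (Int.castRingHom ℚ) + v * B.map (Int.castRingHom ℚ)) := by ring
    _ = C ((b₁:ℤ):ℚ) * C ((b₂:ℤ):ℚ) := by rw [huv, mul_one]

theorem stmt7 (d : ℕ) (hd : 1 < d) (f : Polynomial ℤ)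
    (hf : ¬ ∃ (a : ℤ) (g : Polynomial ℤ), f = C a * g ^ d) :
    ∃ M : ℕ, ∀ p : ℕ, p.Prime → M < p →
      ¬ ∃ (a : ZMod p) (g : Polynomial (ZMod p)),
        f.map (Int.castRingHom (ZMod p)) = C a * g ^ d := by
  classical
  have hd0 : d ≠ 0 := by omega
  have hf0 : f ≠ 0 := by
    rintro rfl
    exact hf ⟨0, 0, by simp [zero_pow hd0]⟩
  -- Step A: find an irreducible factor of positive degree with multiplicity not divisible by d
  have hA : ∃ q ∈ UniqueFactorizationMonoid.normalizedFactors f,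
      0 < q.natDegree ∧ ¬ (d ∣ (UniqueFactorizationMonoid.normalizedFactors f).count q) := by
    by_contra hA
    push_neg at hA
    set ms := UniqueFactorizationMonoid.normalizedFactors f with hms
    obtain ⟨u, hu⟩ := UniqueFactorizationMonoid.prod_normalizedFactors hf0
    obtain ⟨c, hcu, hcC⟩ := Polynomial.isUnit_iff.mp u.isUnit
    have hprod : ms.prod = ∏ x ∈ ms.toFinset, x ^ ms.count x :=
      Finset.prod_multiset_count ms
    have hsplit : (∏ x ∈ ms.toFinset, x ^ ms.count x)
        = (∏ x ∈ ms.toFinset.filter (fun x => 0 < x.natDegree), x ^ ms.count x) *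
          ∏ x ∈ ms.toFinset.filter (fun x => ¬ 0 < x.natDegree), x ^ ms.count x :=
      (Finset.prod_filter_mul_prod_filter_not _ _ _).symm
    have h1 : (∏ x ∈ ms.toFinset.filter (fun x => 0 < x.natDegree), x ^ ms.count x)
        = (∏ x ∈ ms.toFinset.filter (fun x => 0 < x.natDegree), x ^ (ms.count x / d)) ^ d := by
      rw [← Finset.prod_pow]
      refine Finset.prod_congr rfl fun x hx => ?_
      obtain ⟨hxm, hxd⟩ := Finset.mem_filter.mp hx
      rw [← pow_mul, Nat.div_mul_cancel (hA x (Multiset.mem_toFinset.mp hxm) hxd)]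
    have h2 : ∃ b : ℤ,
        C b = ∏ x ∈ ms.toFinset.filter (fun x => ¬ 0 < x.natDegree), x ^ ms.count x := by
      apply Polynomial.natDegree_eq_zero.mp
      rw [Polynomial.natDegree_prod]
      · refine Finset.sum_eq_zero fun x hx => ?_
        obtain ⟨hxm, hxd⟩ := Finset.mem_filter.mp hx
        simp only [not_lt, Nat.le_zero] at hxd
        rw [Polynomial.natDegree_pow, hxd, mul_zero]
      · intro x hx
        obtain ⟨hxm, _⟩ := Finset.mem_filter.mp hx
        exact pow_ne_zero _
          (UniqueFactorizationMonoid.irreducible_of_normalized_factor x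
            (Multiset.mem_toFinset.mp hxm)).ne_zero
    obtain ⟨b, hb⟩ := h2
    apply hf
    refine ⟨b * c, ∏ x ∈ ms.toFinset.filter (fun x => 0 < x.natDegree), x ^ (ms.count x / d), ?_⟩
    rw [← hu, hprod, hsplit, h1, ← hb, ← hcC, C_mul]
    ring
  obtain ⟨q, hqmem, hqdeg, hqcount⟩ := hA
  have hqirr : Irreducible q := UniqueFactorizationMonoid.irreducible_of_normalized_factor q hqmem
  obtain ⟨e, h, hqh, hfeq⟩ := WfDvdMonoid.max_power_factor hf0 hqirr
  have hh0 : h ≠ 0 := by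
    rintro rfl
    rw [mul_zero] at hfeq
    exact hf0 hfeq
  have hde : ¬ d ∣ e := by
    have hc : (UniqueFactorizationMonoid.normalizedFactors f).count q = e := by
      apply UniqueFactorizationMonoid.count_normalizedFactors_eq hqirr
        (UniqueFactorizationMonoid.normalize_normalized_factor q hqmem)
      · exact ⟨h, hfeq⟩
      · rintro ⟨c, hc⟩
        apply hqh
        have : q ^ e * h = q ^ e * (q * c) := by
          rw [← hfeq, hc, pow_succ]
          ring
        exact ⟨c, mul_left_cancel₀ (pow_ne_zero e hqirr.ne_zero) this⟩
    rwa [hc] at hqcount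
  -- q is primitive
  have hqprim : q.IsPrimitive := by
    intro r hr
    obtain ⟨w, hw⟩ := hr
    rcases hqirr.isUnit_or_isUnit hw with h1 | h2
    · exact isUnit_C.mp h1
    · exfalso
      have : q.natDegree ≤ 0 := by
        calc q.natDegree = (C r * w).natDegree := by rw [← hw]
          _ ≤ (C r).natDegree + w.natDegree := natDegree_mul_le
          _ ≤ 0 := by
              rw [natDegree_C, Polynomial.natDegree_eq_zero_of_isUnit h2]
      omega
  -- over ℚ
  set Q : Polynomial ℚ := q.map (Int.castRingHom ℚ) with hQ
  have hQirr : Irreducible Q :=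
    (IsPrimitive.Int.irreducible_iff_irreducible_map_cast hqprim).mp hqirr
  have hQndvd : ¬ Q ∣ h.map (Int.castRingHom ℚ) := by
    intro hdvd
    apply hqh
    have hcont0 : ((h.content : ℚ)) ≠ 0 := by
      exact_mod_cast (Polynomial.content_eq_zero_iff.not.mpr hh0)
    have hmapsplit : h.map (Int.castRingHom ℚ)
        = C ((h.content : ℚ)) * (h.primPart.map (Int.castRingHom ℚ)) := by
      conv_lhs => rw [h.eq_C_content_mul_primPart]
      rw [Polynomial.map_mul, map_C]
      norm_num
    have hPP : Q ∣ h.primPart.map (Int.castRingHom ℚ) := by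
      have hrw : h.primPart.map (Int.castRingHom ℚ)
          = C ((h.content : ℚ))⁻¹ * (h.map (Int.castRingHom ℚ)) := by
        rw [hmapsplit, ← mul_assoc, ← C_mul, inv_mul_cancel₀ hcont0, C_1, one_mul]
      rw [hrw]
      exact Dvd.dvd.mul_left hdvd _
    have hqpp : q ∣ h.primPart :=
      (IsPrimitive.Int.dvd_iff_map_cast_dvd_map_cast q h.primPart hqprim
        ).mpr hPP
    exact hqpp.trans (h.primPart_dvd)
  have hcopQH : IsCoprime Q (h.map (Int.castRingHom ℚ)) :=
    hQirr.coprime_iff_not_dvd.mpr hQndvd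
  have hQsep : IsCoprime Q (derivative Q) := hQirr.separable
  have hQder : derivative Q = (derivative q).map (Int.castRingHom ℚ) :=
    derivative_map q (Int.castRingHom ℚ)
  rw [hQder] at hQsep
  obtain ⟨U₁, V₁, N₁, hN₁0, hN₁⟩ := exists_int_bezout hcopQH
  obtain ⟨U₂, V₂, N₂, hN₂0, hN₂⟩ := exists_int_bezout hQsep
  have hql0 : q.leadingCoeff ≠ 0 := leadingCoeff_ne_zero.mpr hqirr.ne_zero
  have hfl0 : f.leadingCoeff ≠ 0 := leadingCoeff_ne_zero.mpr hf0
  refine ⟨N₁.natAbs ⊔ N₂.natAbs ⊔ q.leadingCoeff.natAbs ⊔ f.leadingCoeff.natAbs,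
    fun p pp hMp => ?_⟩
  haveI : Fact p.Prime := ⟨pp⟩
  set φ := Int.castRingHom (ZMod p) with hφ
  have key : ∀ z : ℤ, z ≠ 0 → z.natAbs ≤ N₁.natAbs ⊔ N₂.natAbs ⊔ q.leadingCoeff.natAbs
      ⊔ f.leadingCoeff.natAbs → (z : ZMod p) ≠ 0 := by
    intro z hz hle hz0
    rw [ZMod.intCast_zmod_eq_zero_iff_dvd] at hz0
    have h1 : p ∣ z.natAbs := Int.natAbs_dvd_natAbs.mpr (by exact_mod_cast hz0)
    have h2 : p ≤ z.natAbs := Nat.le_of_dvd (Int.natAbs_pos.mpr hz) h1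
    omega
  rintro ⟨a, g, hag⟩
  -- basic facts about reductions
  have hqbar0 : φ q.leadingCoeff ≠ 0 := by
    simpa using key q.leadingCoeff hql0 (by omega)
  have hfbar0 : (f.map φ) ≠ 0 := by
    intro h0
    apply key f.leadingCoeff hfl0 (by omega)
    have := congrArg (fun P => Polynomial.coeff P f.natDegree) h0
    simpa [Polynomial.coeff_map] using this
  have hqdegbar : (q.map φ).natDegree = q.natDegree :=
    natDegree_map_of_leadingCoeff_ne_zero φ hqbar0
  have hqbar_ne : q.map φ ≠ 0 := by
    intro h0
    rw [h0, natDegree_zero] at hqdegbar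
    omega
  have hqbar_nu : ¬ IsUnit (q.map φ) := by
    intro hu
    have := Polynomial.natDegree_eq_zero_of_isUnit hu
    omega
  -- coprimality mod p
  have hmap_bezout : ∀ (U V A B : Polynomial ℤ) (N : ℤ), U * A + V * B = C N →
      (U.map φ) * (A.map φ) + (V.map φ) * (B.map φ) = C ((N : ZMod p)) := by
    intro U V A B N hN
    have := congrArg (Polynomial.map φ) hN
    simpa [Polynomial.map_add, Polynomial.map_mul] using this
  have hcop_bar : IsCoprime (q.map φ) (h.map φ) := by
    have hmb := hmap_bezout U₁ V₁ q h N₁ hN₁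
    have hN₁p : ((N₁ : ZMod p)) ≠ 0 := key N₁ hN₁0 (by omega)
    exact ⟨C ((N₁ : ZMod p))⁻¹ * U₁.map φ, C ((N₁ : ZMod p))⁻¹ * V₁.map φ, by
      rw [mul_assoc, mul_assoc, ← mul_add, hmb, ← C_mul, inv_mul_cancel₀ hN₁p, C_1]⟩
  have hsep_bar : IsCoprime (q.map φ) (derivative (q.map φ)) := by
    have hmb := hmap_bezout U₂ V₂ q (derivative q) N₂ hN₂
    have hN₂p : ((N₂ : ZMod p)) ≠ 0 := key N₂ hN₂0 (by omega)
    rw [derivative_map]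
    exact ⟨C ((N₂ : ZMod p))⁻¹ * U₂.map φ, C ((N₂ : ZMod p))⁻¹ * V₂.map φ, by
      rw [mul_assoc, mul_assoc, ← mul_add, hmb, ← C_mul, inv_mul_cancel₀ hN₂p, C_1]⟩
  have hsep' : (q.map φ).Separable := hsep_bar
  have hsqf : Squarefree (q.map φ) := hsep'.squarefree
  -- the reduction of f
  have hfbar : f.map φ = (q.map φ) ^ e * (h.map φ) := by
    rw [hfeq, Polynomial.map_mul, Polynomial.map_pow]
  -- choose an irreducible factor r of q mod p
  obtain ⟨r, hrirr, hrdvd⟩ := WfDvdMonoid.exists_irreducible_factor hqbar_nu hqbar_ne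
  have hrprime : Prime r := hrirr.prime
  obtain ⟨s, hs⟩ := hrdvd
  have hrs : ¬ r ∣ s := by
    intro hdvd
    obtain ⟨t, rfl⟩ := hdvd
    exact hrirr.not_isUnit (hsqf r ⟨t, by rw [hs]; ring⟩)
  have hrh : ¬ r ∣ h.map φ := by
    intro hdvd
    exact hrirr.not_isUnit (hcop_bar.isUnit_of_dvd' ⟨s, hs⟩ hdvd)
  have hhbar0 : h.map φ ≠ 0 := by
    intro h0
    rw [hfbar, h0, mul_zero] at hfbar0
    exact hfbar0 rfl
  have ha0 : a ≠ 0 := by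
    rintro rfl
    rw [map_zero, zero_mul] at hag
    exact hfbar0 hag
  have hg0 : g ≠ 0 := by
    rintro rfl
    rw [zero_pow hd0, mul_zero] at hag
    exact hfbar0 hag
  obtain ⟨m, t, hrt, hgt⟩ := WfDvdMonoid.max_power_factor hg0 hrirr
  -- two expressions for f mod p
  have heq1 : f.map φ = r ^ e * (s ^ e * h.map φ) := by
    rw [hfbar, hs, mul_pow]
    ring
  have heq2 : f.map φ = r ^ (m * d) * (C a * t ^ d) := by
    rw [hag, hgt, mul_pow, ← pow_mul]
    ring
  have hnd1 : ¬ r ∣ s ^ e * h.map φ := by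
    intro hdvd
    rcases hrprime.dvd_mul.mp hdvd with h' | h'
    · exact hrs (hrprime.dvd_of_dvd_pow h')
    · exact hrh h'
  have hnd2 : ¬ r ∣ C a * t ^ d := by
    intro hdvd
    rcases hrprime.dvd_mul.mp hdvd with h' | h'
    · exact hrirr.not_isUnit (isUnit_of_dvd_unit h' (isUnit_C.mpr (isUnit_iff_ne_zero.mpr ha0)))
    · exact hrt (hrprime.dvd_of_dvd_pow h')
  have hem : e = m * d := aux_pow_eq hrirr.ne_zero hnd1 hnd2 (heq1.symm.trans heq2)
  exact hde ⟨m, by rw [hem]; ring⟩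
end

section
/- Let q = p^n with p prime, let θ be a generator of F_q^*, let V ⊆ F_q be a t-dimensional F_p-affine subspace with t ≥ 1, and let d > 1 be a divisor of q−1. For a ∈ {0,...,d−1}, let V_{a(d)} be the number of nonzero v ∈ V such that log_θ v ≡ a (mod d). Then |V_{a(d)} − p^t/d| < p^{n/2}. In particular, if p^{t−n/2} ≥ d then V_{a(d)} > 0. -/
open Finset in
private lemma sum_addChar_subgroup {F : Type*} [Field F] [Fintype F] [DecidableEq F]
    (ψ : AddChar F ℂ) (S : AddSubgroup F) [DecidablePred (· ∈ S)] (y : F) :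
    ∑ b ∈ Finset.univ.filter (· ∈ S), ψ (b * y) =
      if ∀ b ∈ S, ψ (b * y) = 1 then ((Finset.univ.filter (· ∈ S)).card : ℂ) else 0 := by
  split_ifs with h
  · rw [Finset.sum_congr rfl (fun b hb => h b (by simpa using hb))]
    simp
  · push_neg at h
    obtain ⟨b₀, hb₀S, hb₀⟩ := h
    have key : ∑ b ∈ Finset.univ.filter (· ∈ S), ψ (b * y)
        = ψ (b₀ * y) * ∑ b ∈ Finset.univ.filter (· ∈ S), ψ (b * y) := by
      rw [Finset.mul_sum]
      have key2 : ∑ b ∈ Finset.univ.filter (· ∈ S), ψ ((b + b₀) * y)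
          = ∑ b ∈ Finset.univ.filter (· ∈ S), ψ (b * y) := by
        refine Finset.sum_equiv (Equiv.addRight b₀) ?_ ?_
        · intro b
          simp only [Finset.mem_filter, Finset.mem_univ, true_and, Equiv.coe_addRight]
          exact ⟨fun hb => S.add_mem hb hb₀S, fun hb => by simpa using S.sub_mem hb hb₀S⟩
        · intro b _; rfl
      rw [← key2]
      refine Finset.sum_congr rfl fun b _ => ?_
      rw [add_mul, AddChar.map_add_eq_mul, mul_comm]
    have h2 : (ψ (b₀ * y) - 1) * ∑ b ∈ Finset.univ.filter (· ∈ S), ψ (b * y) = 0 := by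
      rw [sub_mul, one_mul, ← key, sub_self]
    rcases mul_eq_zero.1 h2 with h3 | h3
    · exact absurd (by linear_combination h3) hb₀
    · exact h3

set_option maxHeartbeats 1000000 in
theorem stmt14 {F : Type*} [Field F] [Fintype F] (p n : ℕ) (hp : p.Prime) (hn : 0 < n)
    [Algebra (ZMod p) F] (hcard : Fintype.card F = p ^ n)
    (θ : Fˣ) (hθ : ∀ x : Fˣ, x ∈ Subgroup.zpowers θ)
    (t : ℕ) (ht1 : 1 ≤ t)
    (W : Submodule (ZMod p) F) (hW : Module.finrank (ZMod p) W = t)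
    (c : F) (V : Set F) (hV : V = {x : F | ∃ w ∈ W, x = c + w})
    (d : ℕ) (hd : 1 < d) (hdvd : d ∣ p ^ n - 1)
    (a : ℕ) (ha : a < d)
    (Vad : ℕ)
    (hVad : Vad = Nat.card {v : F | v ∈ V ∧ v ≠ 0 ∧
      ∃ i : ℕ, (θ : F) ^ i = v ∧ i % d = a % d}) :
    |(Vad : ℝ) - (p : ℝ) ^ t / d| < (p : ℝ) ^ ((n : ℝ) / 2) ∧
    ((d : ℝ) ≤ (p : ℝ) ^ ((t : ℝ) - (n : ℝ) / 2) → 0 < Vad) := by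
  classical
  haveI : Fact p.Prime := ⟨hp⟩
  -- basic numerology
  set q : ℕ := p ^ n with hq
  have hp2 : 2 ≤ p := hp.two_le
  have hq2 : 2 ≤ q := Nat.one_lt_pow hn.ne' hp.one_lt
  set m : ℕ := q - 1 with hm
  have hm1 : 1 ≤ m := by omega
  have hdm : d ≤ m := Nat.le_of_dvd (by omega) hdvd
  have hm2 : 1 < m := lt_of_lt_of_le hd hdm
  set e : ℕ := m / d with he
  have hde : m = e * d := by rw [he, Nat.div_mul_cancel hdvd]
  have he1 : 1 ≤ e := (Nat.one_le_div_iff (by omega)).2 hdm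
  have hcardU : Fintype.card Fˣ = m := by rw [Fintype.card_units, hcard]
  have hord : orderOf θ = m := by
    rw [orderOf_eq_card_of_forall_mem_zpowers hθ, Nat.card_eq_fintype_card, hcardU]
  -- the discrete logarithm
  obtain ⟨L, hL, hLlt⟩ : ∃ L : Fˣ → ℕ, (∀ u, θ ^ (L u) = u) ∧ ∀ u, L u < m := by
    have hpow : ∀ u : Fˣ, ∃ k : ℕ, θ ^ k = u := by
      intro u
      obtain ⟨k, hk⟩ := Subgroup.mem_zpowers_iff.1 (hθ u)
      refine ⟨(k % (m : ℤ)).toNat, ?_⟩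
      have hnn : (0 : ℤ) ≤ k % (m : ℤ) := Int.emod_nonneg k (by exact_mod_cast (by omega : m ≠ 0))
      rw [← zpow_natCast, Int.toNat_of_nonneg hnn, ← hord, zpow_mod_orderOf, hk]
    choose L0 hL0 using hpow
    refine ⟨fun u => L0 u % m, fun u => ?_, fun u => Nat.mod_lt _ (by omega)⟩
    rw [← hord, pow_mod_orderOf, hL0]
  have hLspec : ∀ (u : Fˣ) (i : ℕ), θ ^ i = u ↔ i ≡ L u [MOD m] := by
    intro u i
    have h2 := pow_eq_pow_iff_modEq (x := θ) (n := i) (m := L u)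
    rw [hord, hL u] at h2
    exact h2
  have hL1 : L 1 = 0 := by
    have h1 : (0 : ℕ) ≡ L 1 [MOD m] := (hLspec 1 0).1 (pow_zero θ)
    have := h1.symm
    rw [Nat.ModEq] at this
    rw [Nat.mod_eq_of_lt (hLlt 1), Nat.zero_mod] at this
    exact this
  have hLθ : L θ = 1 := by
    have h1 : (1 : ℕ) ≡ L θ [MOD m] := (hLspec θ 1).1 (pow_one θ)
    have := h1.symm
    rw [Nat.ModEq] at this
    rw [Nat.mod_eq_of_lt (hLlt θ), Nat.mod_eq_of_lt hm2] at this
    exact this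
  -- roots of unity
  set ζ : ℂ := Complex.exp (2 * Real.pi * Complex.I / m) with hzdef
  have hζ : IsPrimitiveRoot ζ m := Complex.isPrimitiveRoot_exp m (by omega)
  have hζm : ζ ^ m = 1 := hζ.pow_eq_one
  have hζ0 : ζ ≠ 0 := fun h => by simp [h, zero_pow (by omega : m ≠ 0)] at hζm
  set ω : ℂ := ζ ^ e with hwdef
  have hω : IsPrimitiveRoot ω d := IsPrimitiveRoot.pow (by omega) hζ hde
  have hωd : ω ^ d = 1 := hω.pow_eq_one
  set zu : ℂˣ := Units.mk0 ζ hζ0 with hzudef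
  have hzum : zu ^ m = 1 := by ext; push_cast [hzudef]; exact hζm
  have hzuper : ∀ i j : ℕ, i ≡ j [MOD m] → zu ^ i = zu ^ j := by
    intro i j hij
    have h1 : ∀ k : ℕ, zu ^ k = zu ^ (k % m) := by
      intro k
      conv_lhs => rw [← Nat.div_add_mod k m]
      rw [pow_add, pow_mul, hzum, one_pow, one_mul]
    rw [h1 i, h1 j, hij]
  -- the multiplicative characters
  obtain ⟨X, hX⟩ : ∃ X : ℕ → MulChar F ℂ, ∀ (k : ℕ) (u : Fˣ), X k ↑u = ζ ^ (L u * k) := by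
    refine ⟨fun k => MulChar.ofUnitHom
      { toFun := fun u => zu ^ (L u * k)
        map_one' := by show zu ^ (L 1 * k) = 1; rw [hL1]; simp
        map_mul' := by
          intro u v
          show zu ^ (L (u * v) * k) = zu ^ (L u * k) * zu ^ (L v * k)
          rw [← pow_add, ← add_mul]
          refine hzuper _ _ (Nat.ModEq.mul_right k ?_)
          refine ((hLspec (u * v) (L u + L v)).1 ?_).symm
          rw [pow_add, hL u, hL v]}, ?_⟩
    intro k u
    rw [MulChar.ofUnitHom_coe]
    push_cast [hzudef]
    rfl
  have hX0 : ∀ k : ℕ, X k (0 : F) = 0 := fun k => (X k).map_nonunit not_isUnit_zero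
  have hXθ : ∀ k : ℕ, X k ↑θ = ζ ^ k := by
    intro k; rw [hX k θ, hLθ, one_mul]
  have hXne : ∀ j : ℕ, 1 ≤ j → j < d → X (e * j) ≠ 1 := by
    intro j hj1 hjd h1
    have h2 : X (e * j) ↑θ = 1 := by rw [h1, MulChar.one_apply_coe]
    rw [hXθ, pow_mul] at h2
    exact (hω.pow_ne_one_of_pos_of_lt (by omega) hjd) h2
  -- the additive character
  have hFnontriv : Nontrivial F := Fintype.one_lt_card_iff_nontrivial.1 (by omega)
  obtain ⟨ψ, hψprim⟩ : ∃ ψ : AddChar F ℂ, ∀ b : F, b ≠ 0 → AddChar.mulShift ψ b ≠ 1 := by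
    set ζp : ℂ := Complex.exp (2 * Real.pi * Complex.I / p) with hzp
    have hζp : IsPrimitiveRoot ζp p := Complex.isPrimitiveRoot_exp p hp.ne_zero
    have hζpp : ζp ^ p = 1 := hζp.pow_eq_one
    obtain ⟨i0⟩ : Nonempty (Module.Basis.ofVectorSpaceIndex (ZMod p) F) :=
      (Module.Basis.ofVectorSpace (ZMod p) F).index_nonempty
    set b := Module.Basis.ofVectorSpace (ZMod p) F with hb
    set f : F →ₗ[ZMod p] ZMod p := b.coord i0 with hf
    have hper : ∀ k : ℕ, ζp ^ (k % p) = ζp ^ k := by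
      intro k
      conv_rhs => rw [← Nat.div_add_mod k p]
      rw [pow_add, pow_mul, hζpp, one_pow, one_mul]
    refine ⟨{ toFun := fun x => ζp ^ (f x).val
              map_zero_eq_one' := by simp
              map_add_eq_mul' := by
                intro x y
                simp only [map_add]
                rw [← pow_add, ZMod.val_add, hper] }, ?_⟩
    intro v hv h1
    set x₀ : F := b i0 with hx0
    have hfx₀ : f x₀ = 1 := by simp [hf, hx0]
    have h2 := DFunLike.congr_fun h1 (v⁻¹ * x₀)
    rw [AddChar.mulShift_apply, AddChar.one_apply] at h2
    rw [← mul_assoc, mul_inv_cancel₀ hv, one_mul] at h2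
    simp only [AddChar.coe_mk] at h2
    rw [hfx₀, ZMod.val_one, pow_one] at h2
    exact hζp.ne_one hp.one_lt h2
  have hψabs : ∀ x : F, ‖ψ x‖ = 1 := by
    intro x
    refine Complex.norm_eq_one_of_pow_eq_one (n := q) ?_ (by omega)
    rw [← AddChar.map_nsmul_eq_pow, ← hcard, card_nsmul_eq_zero, AddChar.map_zero_eq_one]
  have hψ0 : ∀ x : F, ψ (-x) = (ψ x)⁻¹ := by
    intro x
    have h1 : ψ (-x) * ψ x = 1 := by
      rw [← AddChar.map_add_eq_mul, neg_add_cancel, AddChar.map_zero_eq_one]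
    exact eq_inv_of_mul_eq_one_left h1
  -- the Gauss sum bound
  set s : ℝ := Real.sqrt q with hs
  have hs1 : 1 < s := by
    rw [hs, show (1:ℝ) = Real.sqrt 1 by simp]
    exact Real.sqrt_lt_sqrt (by norm_num) (by exact_mod_cast hq2)
  have hGauss : ∀ (χ : MulChar F ℂ) (bb : F), χ ≠ 1 → bb ≠ 0 →
      ‖gaussSum χ (AddChar.mulShift ψ bb)‖ = s := by
    intro χ bb hχ hbb
    have hprim : (AddChar.mulShift ψ bb).IsPrimitive := by
      intro a ha
      rw [AddChar.mulShift_mulShift]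
      exact hψprim _ (mul_ne_zero hbb ha)
    have hconjχ : ∀ x : F, (starRingEnd ℂ) (χ x) = χ⁻¹ x := by
      intro x
      rcases eq_or_ne x 0 with rfl | hx
      · rw [MulChar.map_nonunit χ not_isUnit_zero, MulChar.map_nonunit χ⁻¹ not_isUnit_zero, map_zero]
      · have habs : ‖χ x‖ = 1 := by
          refine Complex.norm_eq_one_of_pow_eq_one (n := q - 1) ?_ (by omega)
          rw [← map_pow, ← hcard, FiniteField.pow_card_sub_one_eq_one x hx, map_one]
        have hinv : χ x⁻¹ = (χ x)⁻¹ := by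
          refine eq_inv_of_mul_eq_one_left ?_
          rw [← map_mul, inv_mul_cancel₀ hx, map_one]
        rw [MulChar.inv_apply', hinv, ← Complex.inv_eq_conj habs]
    have hconjψ : ∀ x : F, (starRingEnd ℂ) ((AddChar.mulShift ψ bb) x)
        = (AddChar.mulShift ψ bb)⁻¹ x := by
      intro x
      rw [AddChar.inv_apply, AddChar.mulShift_apply, AddChar.mulShift_apply, mul_neg, hψ0]
      rw [← Complex.inv_eq_conj (hψabs _)]
    have hconj : (starRingEnd ℂ) (gaussSum χ (AddChar.mulShift ψ bb))
        = gaussSum χ⁻¹ (AddChar.mulShift ψ bb)⁻¹ := by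
      rw [gaussSum, gaussSum, map_sum]
      refine Finset.sum_congr rfl fun x _ => ?_
      rw [map_mul, hconjχ, hconjψ]
    have hmul := gaussSum_mul_gaussSum_eq_card hχ hprim
    rw [← hconj, Complex.mul_conj, hcard] at hmul
    have h2 : Complex.normSq (gaussSum χ (AddChar.mulShift ψ bb)) = (q : ℝ) := by
      exact_mod_cast hmul
    rw [hs, ← h2, Complex.normSq_eq_norm_sq, Real.sqrt_sq (norm_nonneg _)]
  have hψP : ψ.IsPrimitive := fun a ha => hψprim a ha
  -- the annihilator subgroup
  set WA : AddSubgroup F := W.toAddSubgroup with hWA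
  set Wfin : Finset F := Finset.univ.filter (· ∈ WA) with hWfin
  set B : AddSubgroup F :=
    { carrier := {y : F | ∀ w ∈ WA, ψ (w * y) = 1}
      zero_mem' := by intro w _; rw [mul_zero, AddChar.map_zero_eq_one]
      add_mem' := by
        intro y z hy hz w hw
        rw [mul_add, AddChar.map_add_eq_mul, hy w hw, hz w hw, mul_one]
      neg_mem' := by
        intro y hy w hw
        rw [mul_neg, hψ0, hy w hw, inv_one] } with hB
  set Bfin : Finset F := Finset.univ.filter (· ∈ B) with hBfin
  set W' : AddSubgroup F :=
    { carrier := {y : F | ∀ b ∈ B, ψ (b * y) = 1}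
      zero_mem' := by intro b _; rw [mul_zero, AddChar.map_zero_eq_one]
      add_mem' := by
        intro y z hy hz b hb
        rw [mul_add, AddChar.map_add_eq_mul, hy b hb, hz b hb, mul_one]
      neg_mem' := by
        intro y hy b hb
        rw [mul_neg, hψ0, hy b hb, inv_one] } with hW'
  set W'fin : Finset F := Finset.univ.filter (· ∈ W') with hW'fin
  have hsum_all : ∀ y : F, y ≠ 0 → ∑ x : F, ψ (x * y) = 0 := by
    intro y hy
    have := AddChar.sum_mulShift y hψP
    rw [if_neg hy] at this
    exact_mod_cast this
  have hsum_all0 : ∀ y : F, ∑ x : F, ψ (x * y) = if y = 0 then (q : ℂ) else 0 := by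
    intro y
    have := AddChar.sum_mulShift y hψP
    rw [← hcard]
    exact_mod_cast this
  have hdouble : ∀ (S : AddSubgroup F) (T : AddSubgroup F),
      (∀ y : F, (∑ b ∈ Finset.univ.filter (· ∈ S), ψ (b * y)) =
        if y ∈ T then ((Finset.univ.filter (· ∈ S)).card : ℂ) else 0) →
      ((Finset.univ.filter (· ∈ S)).card : ℂ) * ((Finset.univ.filter (· ∈ T)).card : ℂ)
        = (q : ℂ) := by
    intro S T hST
    have h1 : ∑ b ∈ Finset.univ.filter (· ∈ S), ∑ y : F, ψ (b * y) = (q : ℂ) := by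
      rw [Finset.sum_congr rfl (fun b _ => by
        rw [Finset.sum_congr rfl (fun y _ => by rw [mul_comm]), hsum_all0 b])]
      rw [Finset.sum_ite_eq' (Finset.univ.filter (· ∈ S)) (0 : F) (fun _ => (q : ℂ))]
      rw [if_pos (by simp [S.zero_mem])]
    have h2 : ∑ b ∈ Finset.univ.filter (· ∈ S), ∑ y : F, ψ (b * y)
        = ((Finset.univ.filter (· ∈ S)).card : ℂ)
          * ((Finset.univ.filter (· ∈ T)).card : ℂ) := by
      rw [Finset.sum_comm]
      rw [Finset.sum_congr rfl (fun y _ => hST y)]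
      rw [show (∑ y : F, if y ∈ T then ((Finset.univ.filter (· ∈ S)).card : ℂ) else 0)
          = ∑ y ∈ Finset.univ.filter (· ∈ T), ((Finset.univ.filter (· ∈ S)).card : ℂ) from
          (Finset.sum_filter _ _).symm]
      rw [Finset.sum_const, nsmul_eq_mul, mul_comm]
    rw [← h2, h1]
  have hBW : ∀ y : F, (∑ b ∈ Bfin, ψ (b * y)) = if y ∈ Wfin then (Bfin.card : ℂ) else 0 := by
    have hWsub : Wfin ⊆ W'fin := by
      intro w hw
      simp only [hWfin, hW'fin, Finset.mem_filter, Finset.mem_univ, true_and] at hw ⊢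
      intro b hb
      rw [mul_comm]
      exact hb w hw
    have hc1 : ((Finset.univ.filter (· ∈ WA)).card : ℂ)
        * ((Finset.univ.filter (· ∈ B)).card : ℂ) = (q : ℂ) := by
      refine hdouble WA B ?_
      intro y
      rw [sum_addChar_subgroup ψ WA y]
      exact if_congr Iff.rfl rfl rfl
    have hc2 : ((Finset.univ.filter (· ∈ B)).card : ℂ)
        * ((Finset.univ.filter (· ∈ W')).card : ℂ) = (q : ℂ) := by
      refine hdouble B W' ?_
      intro y
      rw [sum_addChar_subgroup ψ B y]
      exact if_congr Iff.rfl rfl rfl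
    have hBpos : 0 < Bfin.card := by
      refine Finset.card_pos.2 ⟨0, ?_⟩
      simp [hBfin, B.zero_mem]
    have hcc : W'fin.card = Wfin.card := by
      have e1 : (Wfin.card : ℂ) * (Bfin.card : ℂ) = (Bfin.card : ℂ) * (W'fin.card : ℂ) := by
        rw [hc1.trans hc2.symm]
      have e2 : Wfin.card * Bfin.card = Bfin.card * W'fin.card := by exact_mod_cast e1
      exact Nat.eq_of_mul_eq_mul_left hBpos
        (by rw [← e2, Nat.mul_comm] : Bfin.card * W'fin.card = Bfin.card * Wfin.card)
    have hWW' : Wfin = W'fin := Finset.eq_of_subset_of_card_le hWsub (le_of_eq hcc)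
    intro y
    rw [sum_addChar_subgroup ψ B y]
    have hmemiff : (∀ b ∈ B, ψ (b * y) = 1) ↔ y ∈ Wfin := by
      constructor
      · intro h
        have : y ∈ W'fin := by simp only [hW'fin, Finset.mem_filter, Finset.mem_univ, true_and]; exact h
        rwa [← hWW'] at this
      · intro h b hb
        rw [mul_comm]
        simp only [hWfin, Finset.mem_filter, Finset.mem_univ, true_and] at h
        exact hb y h
    rw [if_congr hmemiff rfl rfl]
  have hBpos : 0 < Bfin.card := by
    refine Finset.card_pos.2 ⟨0, ?_⟩
    simp [hBfin, B.zero_mem]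
  -- character sum over the affine subspace is bounded by s
  have hT : ∀ k : ℕ, X k ≠ 1 → ‖∑ w ∈ Wfin, X k (c + w)‖ ≤ s := by
    intro k hχ
    set χ : MulChar F ℂ := X k with hχdef
    have key : (Bfin.card : ℂ) * (∑ w ∈ Wfin, χ (c + w))
        = ∑ b ∈ Bfin, ψ (-(b * c)) * gaussSum χ (AddChar.mulShift ψ b) := by
      have step1 : ∀ b : F, ψ (-(b * c)) * gaussSum χ (AddChar.mulShift ψ b)
          = ∑ x : F, χ x * ψ (b * (x - c)) := by
        intro b
        rw [gaussSum, Finset.mul_sum]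
        refine Finset.sum_congr rfl fun x _ => ?_
        rw [AddChar.mulShift_apply, mul_sub, sub_eq_add_neg, AddChar.map_add_eq_mul]
        ring
      rw [Finset.sum_congr rfl fun b _ => step1 b]
      rw [Finset.sum_comm]
      have step2 : ∀ x : F, ∑ b ∈ Bfin, χ x * ψ (b * (x - c))
          = if x - c ∈ Wfin then (Bfin.card : ℂ) * χ x else 0 := by
        intro x
        rw [← Finset.mul_sum, hBW (x - c)]
        split_ifs with h
        · ring
        · rw [mul_zero]
      rw [Finset.sum_congr rfl fun x _ => step2 x]
      rw [← Finset.sum_filter]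
      rw [Finset.mul_sum]
      refine (Finset.sum_nbij' (fun x => x - c) (fun w => c + w) ?_ ?_ ?_ ?_ ?_).symm
      · intro x hx
        simpa using (Finset.mem_filter.1 hx).2
      · intro w hw
        simp only [Finset.mem_filter, Finset.mem_univ, true_and]
        simpa using hw
      · intro x _; ring
      · intro w _; ring
      · intro x hx
        rw [add_sub_cancel]
    have habsle : ∀ b ∈ Bfin,
        ‖ψ (-(b * c)) * gaussSum χ (AddChar.mulShift ψ b)‖ ≤ s := by
      intro b _
      rcases eq_or_ne b 0 with rfl | hb
      · rw [AddChar.mulShift_zero]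
        have : gaussSum χ (1 : AddChar F ℂ) = 0 := by
          rw [gaussSum]
          rw [Finset.sum_congr rfl fun x _ => by rw [AddChar.one_apply, mul_one]]
          exact MulChar.sum_eq_zero_of_ne_one hχ
        rw [this, mul_zero, norm_zero]
        linarith
      · rw [norm_mul, hψabs, hGauss χ b hχ hb, one_mul]
    have hcalc : (Bfin.card : ℝ) * ‖∑ w ∈ Wfin, χ (c + w)‖ ≤ Bfin.card * s := by
      calc (Bfin.card : ℝ) * ‖∑ w ∈ Wfin, χ (c + w)‖
          = ‖(Bfin.card : ℂ) * (∑ w ∈ Wfin, χ (c + w))‖ := by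
            rw [norm_mul, Complex.norm_natCast]
        _ = ‖∑ b ∈ Bfin, ψ (-(b * c)) * gaussSum χ (AddChar.mulShift ψ b)‖ := by
            rw [key]
        _ ≤ ∑ b ∈ Bfin, ‖ψ (-(b * c)) * gaussSum χ (AddChar.mulShift ψ b)‖ :=
            norm_sum_le _ _
        _ ≤ ∑ _b ∈ Bfin, s := Finset.sum_le_sum habsle
        _ = Bfin.card * s := by rw [Finset.sum_const, nsmul_eq_mul]
    have hb' : (0 : ℝ) < (Bfin.card : ℝ) := by exact_mod_cast hBpos
    exact le_of_mul_le_mul_left hcalc hb'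
  -- counting
  set QV : Finset Fˣ := Finset.univ.filter (fun u : Fˣ => (u : F) ∈ V) with hQV
  set NQ : Finset Fˣ :=
    Finset.univ.filter (fun u : Fˣ => (u : F) ∈ V ∧ L u % d = a % d) with hNQ
  have hVadNQ : Vad = NQ.card := by
    rw [hVad]
    have h1 : {v : F | v ∈ V ∧ v ≠ 0 ∧ ∃ i : ℕ, (θ : F) ^ i = v ∧ i % d = a % d}.toFinset
        = Finset.univ.filter (fun v : F => v ∈ V ∧ v ≠ 0 ∧
            ∃ i : ℕ, (θ : F) ^ i = v ∧ i % d = a % d) := by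
      ext v; simp; tauto
    rw [Nat.card_eq_card_toFinset, h1]
    refine Finset.card_bij (fun v hv => Units.mk0 v
      (by exact (Finset.mem_filter.1 hv).2.2.1)) ?_ ?_ ?_
    · intro v hv
      obtain ⟨-, hvV, hv0, i, hiv, hia⟩ := Finset.mem_filter.1 hv
      simp only [hNQ, Finset.mem_filter, Finset.mem_univ, true_and, Units.val_mk0]
      refine ⟨hvV, ?_⟩
      have hiu : θ ^ i = Units.mk0 v hv0 := by
        ext
        rw [Units.val_pow_eq_pow_val, Units.val_mk0, hiv]
      have h2 : i ≡ L (Units.mk0 v hv0) [MOD m] := (hLspec _ i).1 hiu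
      have h3 := (h2.of_dvd hdvd).symm
      rw [Nat.ModEq] at h3
      rw [h3, hia]
    · intro v₁ hv₁ v₂ hv₂ h12
      have := congrArg Units.val h12
      simpa using this
    · intro u hu
      obtain ⟨-, huV, hud⟩ := Finset.mem_filter.1 hu
      refine ⟨(u : F), ?_, ?_⟩
      · refine Finset.mem_filter.2 ⟨Finset.mem_univ _, huV, u.ne_zero, L u, ?_, ?_⟩
        · rw [← Units.val_pow_eq_pow_val, hL u]
        · exact hud
      · ext; simp
  -- cardinality of V ∩ Fˣ
  have hWfin_eq : Wfin = Finset.univ.filter (· ∈ W) := by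
    ext x
    simp [hWfin, hWA]
  have hWcard : Wfin.card = p ^ t := by
    rw [hWfin_eq]
    rw [← Fintype.card_subtype]
    have h1 : Fintype.card ↥W = Fintype.card (ZMod p) ^ Module.finrank (ZMod p) ↥W :=
      Module.card_eq_pow_finrank
    rw [ZMod.card, hW] at h1
    exact h1
  set Vfin : Finset F := Finset.univ.filter (· ∈ V) with hVfin
  have hmemV : ∀ x : F, x ∈ V ↔ x - c ∈ Wfin := by
    intro x
    rw [hV, hWfin_eq]
    simp only [Set.mem_setOf_eq, Finset.mem_filter, Finset.mem_univ, true_and]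
    constructor
    · rintro ⟨w, hw, rfl⟩; simpa using hw
    · intro h; exact ⟨x - c, h, by ring⟩
  have hVcard : Vfin.card = p ^ t := by
    rw [← hWcard]
    refine Finset.card_nbij' (fun x => x - c) (fun w => c + w) ?_ ?_ ?_ ?_
    · intro x hx
      simp only [Finset.mem_coe]
      rw [← hmemV x]
      simpa [hVfin] using hx
    · intro w hw
      simp only [hVfin, Finset.mem_coe, Finset.mem_filter, Finset.mem_univ, true_and]
      rw [hmemV]
      simpa using hw
    · intro x _; ring
    · intro w _; ring
  set εC : ℂ := if (0 : F) ∈ V then 1 else 0 with hεC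
  have hQVcard : (QV.card : ℂ) = (p ^ t : ℂ) - εC := by
    have h1 : QV.card = (Vfin.erase 0).card := by
      refine Finset.card_bij (fun u _ => (u : F)) ?_ ?_ ?_
      · intro u hu
        simp only [hQV, Finset.mem_filter, Finset.mem_univ, true_and] at hu
        exact Finset.mem_erase.2 ⟨u.ne_zero, by simpa [hVfin] using hu⟩
      · intro u₁ _ u₂ _ h; exact Units.ext h
      · intro x hx
        obtain ⟨hx0, hxV⟩ := Finset.mem_erase.1 hx
        refine ⟨Units.mk0 x hx0, ?_, rfl⟩
        simp only [hQV, Finset.mem_filter, Finset.mem_univ, true_and, Units.val_mk0]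
        simpa [hVfin] using hxV
    rw [h1, hεC]
    split_ifs with h0
    · have h0' : (0 : F) ∈ Vfin := by simpa [hVfin] using h0
      rw [Finset.card_erase_of_mem h0', hVcard]
      have hpt : 1 ≤ p ^ t := Nat.one_le_pow _ _ (by omega)
      push_cast [Nat.cast_sub hpt]
      ring
    · have h0' : (0 : F) ∉ Vfin := by simpa [hVfin] using h0
      rw [Finset.erase_eq_of_notMem h0', hVcard]
      push_cast
      ring
  -- transfer of character sums
  have hTrans : ∀ k : ℕ, ∑ u ∈ QV, X k ↑u = ∑ w ∈ Wfin, X k (c + w) := by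
    intro k
    have ha1 : ∑ u ∈ QV, X k ↑u = ∑ x ∈ Vfin.erase 0, X k x := by
      refine Finset.sum_bij (fun u _ => (u : F)) ?_ ?_ ?_ ?_
      · intro u hu
        simp only [hQV, Finset.mem_filter, Finset.mem_univ, true_and] at hu
        exact Finset.mem_erase.2 ⟨u.ne_zero, by simpa [hVfin] using hu⟩
      · intro u₁ _ u₂ _ h; exact Units.ext h
      · intro x hx
        obtain ⟨hx0, hxV⟩ := Finset.mem_erase.1 hx
        refine ⟨Units.mk0 x hx0, ?_, rfl⟩
        simp only [hQV, Finset.mem_filter, Finset.mem_univ, true_and, Units.val_mk0]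
        simpa [hVfin] using hxV
      · intro u _; rfl
    have ha2 : ∑ x ∈ Vfin.erase 0, X k x = ∑ x ∈ Vfin, X k x :=
      Finset.sum_erase Vfin (hX0 k)
    have ha3 : ∑ x ∈ Vfin, X k x = ∑ w ∈ Wfin, X k (c + w) := by
      refine Finset.sum_nbij' (fun x => x - c) (fun w => c + w) ?_ ?_ ?_ ?_ ?_
      · intro x hx
        rw [← hmemV x]
        simpa [hVfin] using hx
      · intro w hw
        simp only [hVfin, Finset.mem_filter, Finset.mem_univ, true_and]
        rw [hmemV]
        simpa using hw
      · intro x _; ring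
      · intro w _; ring
      · intro x _
        rw [add_sub_cancel]
    rw [ha1, ha2, ha3]
  -- the geometric sum identity
  have hω0 : ω ≠ 0 := by
    rw [hwdef]
    exact pow_ne_zero e hζ0
  have hgeom : ∀ u : Fˣ, (∑ j ∈ Finset.range d, (ω ^ (L u) * (ω ^ a)⁻¹) ^ j)
      = if L u % d = a % d then (d : ℂ) else 0 := by
    intro u
    set z : ℂ := ω ^ (L u) * (ω ^ a)⁻¹ with hz
    have hzd : z ^ d = 1 := by
      rw [hz, mul_pow, inv_pow, ← pow_mul, mul_comm (L u) d, pow_mul, hωd, one_pow, one_mul,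
        ← pow_mul, mul_comm a d, pow_mul, hωd, one_pow, inv_one]
    have hz1 : z = 1 ↔ L u % d = a % d := by
      rw [hz, mul_inv_eq_one₀ (pow_ne_zero _ hω0)]
      have hωu : IsPrimitiveRoot (zu ^ e) d := by
        rw [← IsPrimitiveRoot.coe_units_iff]
        push_cast [hzudef]
        exact hω
      have h2 := pow_eq_pow_iff_modEq (x := zu ^ e) (n := L u) (m := a)
      rw [← hωu.eq_orderOf] at h2
      rw [show (ω ^ L u = ω ^ a) ↔ ((zu ^ e) ^ L u = (zu ^ e) ^ a) from ?_, h2]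
      · rfl
      · rw [Units.ext_iff]
        push_cast [hzudef]
        rfl
    split_ifs with h
    · rw [Finset.sum_congr rfl fun j _ => by rw [hz1.2 h, one_pow]]
      simp
    · have hzne : z ≠ 1 := fun hh => h (hz1.1 hh)
      rw [geom_sum_eq hzne, hzd, sub_self, zero_div]
  -- the main identity
  have hperj : ∀ (j : ℕ) (u : Fˣ), (ω ^ (L u) * (ω ^ a)⁻¹) ^ j
      = ((ω ^ a) ^ j)⁻¹ * X (e * j) ↑u := by
    intro j u
    rw [hX, mul_pow, inv_pow, ← pow_mul, hwdef, ← pow_mul]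
    rw [mul_comm]
    congr 2
    ring
  have hid : (d : ℂ) * NQ.card - ((p ^ t : ℂ) - εC)
      = ∑ j ∈ Finset.Ico 1 d, ((ω ^ a) ^ j)⁻¹ * ∑ w ∈ Wfin, X (e * j) (c + w) := by
    have hA : (d : ℂ) * NQ.card
        = ∑ u ∈ QV, ∑ j ∈ Finset.range d, (ω ^ (L u) * (ω ^ a)⁻¹) ^ j := by
      rw [Finset.sum_congr rfl fun u _ => hgeom u]
      rw [Finset.sum_ite, Finset.sum_const_zero, add_zero, Finset.sum_const, nsmul_eq_mul]
      rw [mul_comm]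
      congr 2
      rw [hQV, Finset.filter_filter]
    have hB : ∑ u ∈ QV, ∑ j ∈ Finset.range d, (ω ^ (L u) * (ω ^ a)⁻¹) ^ j
        = ∑ j ∈ Finset.range d, ∑ u ∈ QV, (ω ^ (L u) * (ω ^ a)⁻¹) ^ j :=
      Finset.sum_comm
    have hC : ∑ j ∈ Finset.range d, ∑ u ∈ QV, (ω ^ (L u) * (ω ^ a)⁻¹) ^ j
        = (QV.card : ℂ) + ∑ j ∈ Finset.Ico 1 d, ∑ u ∈ QV, (ω ^ (L u) * (ω ^ a)⁻¹) ^ j := by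
      rw [Finset.range_eq_Ico, Finset.sum_eq_sum_Ico_succ_bot (by omega : 0 < d)]
      congr 1
      rw [Finset.sum_congr rfl fun u _ => pow_zero _]
      simp
    have hD : ∀ j : ℕ, ∑ u ∈ QV, (ω ^ (L u) * (ω ^ a)⁻¹) ^ j
        = ((ω ^ a) ^ j)⁻¹ * ∑ w ∈ Wfin, X (e * j) (c + w) := by
      intro j
      rw [Finset.sum_congr rfl fun u _ => hperj j u, ← Finset.mul_sum, hTrans (e * j)]
    rw [hA, hB, hC, hQVcard, Finset.sum_congr rfl fun j _ => hD j]
    ring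
  have hωabs : ‖ω‖ = 1 := by
    exact Complex.norm_eq_one_of_pow_eq_one hωd (by omega)
  have hEbound : ‖(d : ℂ) * NQ.card - ((p ^ t : ℂ) - εC)‖ ≤ ((d : ℝ) - 1) * s := by
    rw [hid]
    calc ‖∑ j ∈ Finset.Ico 1 d, ((ω ^ a) ^ j)⁻¹ * ∑ w ∈ Wfin, X (e * j) (c + w)‖
        ≤ ∑ j ∈ Finset.Ico 1 d,
            ‖((ω ^ a) ^ j)⁻¹ * ∑ w ∈ Wfin, X (e * j) (c + w)‖ :=
          norm_sum_le _ _
      _ ≤ ∑ _j ∈ Finset.Ico 1 d, s := by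
          refine Finset.sum_le_sum fun j hj => ?_
          obtain ⟨hj1, hj2⟩ := Finset.mem_Ico.1 hj
          rw [norm_mul, norm_inv, norm_pow, norm_pow, hωabs, one_pow, one_pow, inv_one, one_mul]
          exact hT (e * j) (hXne j hj1 hj2)
      _ = ((d : ℝ) - 1) * s := by
          rw [Finset.sum_const, nsmul_eq_mul, Nat.card_Ico]
          congr 1
          push_cast [Nat.cast_sub (by omega : 1 ≤ d)]
          ring
  -- pass to the reals
  set εR : ℝ := if (0 : F) ∈ V then 1 else 0 with hεR
  have hεCR : εC = ((εR : ℝ) : ℂ) := by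
    rw [hεC, hεR]
    split_ifs <;> simp
  have hreal : |(d : ℝ) * NQ.card - ((p ^ t : ℝ) - εR)| ≤ ((d : ℝ) - 1) * s := by
    have hcast : ((d : ℂ) * NQ.card - ((p ^ t : ℂ) - εC))
        = (((d : ℝ) * NQ.card - ((p ^ t : ℝ) - εR) : ℝ) : ℂ) := by
      rw [hεCR]
      push_cast
      ring
    rw [hcast, Complex.norm_real, Real.norm_eq_abs] at hEbound
    exact hEbound
  have hεR01 : 0 ≤ εR ∧ εR ≤ 1 := by
    rw [hεR]; split_ifs <;> norm_num
  have hd0 : (0 : ℝ) < d := by positivity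
  have h1' : |(d : ℝ) * NQ.card - (p ^ t : ℝ)| < s * d := by
    have h2 : |(d : ℝ) * NQ.card - (p ^ t : ℝ)|
        ≤ |(d : ℝ) * NQ.card - ((p ^ t : ℝ) - εR)| + |εR| := by
      have h3 : (d : ℝ) * NQ.card - (p ^ t : ℝ)
          = ((d : ℝ) * NQ.card - ((p ^ t : ℝ) - εR)) + (-εR) := by ring
      rw [h3]
      exact (abs_add_le _ _).trans (by rw [abs_neg])
    have h4 : |εR| ≤ 1 := by rw [abs_of_nonneg hεR01.1]; exact hεR01.2
    have h5 : ((d : ℝ) - 1) * s + 1 < s * d := by nlinarith [hs1]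
    linarith [hreal]
  have hfinal1 : |(NQ.card : ℝ) - (p ^ t : ℝ) / d| < s := by
    rw [show (NQ.card : ℝ) - (p ^ t : ℝ) / d = ((d : ℝ) * NQ.card - (p ^ t : ℝ)) / d by
      field_simp]
    rw [abs_div, abs_of_pos hd0, div_lt_iff₀ hd0]
    exact h1'
  have hsrpow : (p : ℝ) ^ ((n : ℝ) / 2) = s := by
    rw [hs]
    have hq' : ((q : ℕ) : ℝ) = (p : ℝ) ^ (n : ℝ) := by
      rw [Real.rpow_natCast, hq]
      push_cast
      ring
    rw [hq', Real.sqrt_eq_rpow, ← Real.rpow_mul (by positivity : (0:ℝ) ≤ (p:ℝ))]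
    congr 1
    ring
  have hmaingoal : |(Vad : ℝ) - (p : ℝ) ^ t / d| < (p : ℝ) ^ ((n : ℝ) / 2) := by
    rw [hsrpow, hVadNQ]
    push_cast
    push_cast at hfinal1
    exact hfinal1
  refine ⟨hmaingoal, ?_⟩
  intro hle
  have hp0 : (0 : ℝ) < p := by positivity
  have hsd : s * d ≤ (p : ℝ) ^ t := by
    calc s * d ≤ s * (p : ℝ) ^ ((t : ℝ) - (n : ℝ) / 2) := by
          refine mul_le_mul_of_nonneg_left hle ?_
          rw [hs]; positivity
      _ = (p : ℝ) ^ ((n : ℝ) / 2) * (p : ℝ) ^ ((t : ℝ) - (n : ℝ) / 2) := by rw [hsrpow]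
      _ = (p : ℝ) ^ ((n : ℝ) / 2 + ((t : ℝ) - (n : ℝ) / 2)) := (Real.rpow_add hp0 _ _).symm
      _ = (p : ℝ) ^ ((t : ℝ)) := by ring_nf
      _ = (p : ℝ) ^ t := Real.rpow_natCast p t
  have hps : s ≤ (p : ℝ) ^ t / d := (le_div_iff₀ hd0).2 hsd
  have hlow := (abs_lt.1 hmaingoal).1
  rw [hsrpow] at hlow
  have : (0 : ℝ) < (Vad : ℝ) := by linarith
  exact_mod_cast this
end
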